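/- For every non-negative integer d, the spreading number in two variables satisfies α_2(d) = ⌊d/2⌋ + 1. -/

import Mathlib

/-- Monomials of degree `d` in `n` variables, identified with exponent vectors
`a : Fin n → ℕ` with `∑ i, a i = d`. -/
def Mset (n d : ℕ) : Finset (Fin n → ℕ) := Finset.Nat.antidiagonalTuple n d

/-- `R₁W = { a + e_i : a ∈ W, 1 ≤ i ≤ n }`, where `e_i` is the `i`-th standard
unit vector. -/
def R1 (n : ℕ) (W : Finset (Fin n → ℕ)) : Finset (Fin n → ℕ) :=
  (W ×ˢ (Finset.univ : Finset (Fin n))).image fun p => p.1 + Pi.single p.2 1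
/-- The spreading number `α_n(d) = max{ |W| : W ⊆ M_d and |R₁W| = n·|W| }`. -/
noncomputable def spread (n d : ℕ) : ℕ :=
  sSup {k | ∃ W : Finset (Fin n → ℕ),
    W ⊆ Mset n d ∧ (R1 n W).card = n * W.card ∧ W.card = k}

lemma mem_Mset {n d : ℕ} {a : Fin n → ℕ} : a ∈ Mset n d ↔ ∑ i, a i = d :=
  Finset.Nat.mem_antidiagonalTuple

lemma card_Mset_two_le (m : ℕ) : (Mset 2 m).card ≤ m + 1 := by
  have : (Mset 2 m).card ≤ (Finset.range (m+1)).card := by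
    apply Finset.card_le_card_of_injOn (fun f => f 0)
    · intro f hf
      simp only [Finset.mem_coe, mem_Mset, Fin.sum_univ_two] at hf
      simp only [Finset.coe_range, Set.mem_Iio, Finset.mem_coe, Finset.mem_range]
      omega
    · intro f hf g hg h
      simp only [Finset.mem_coe, mem_Mset, Fin.sum_univ_two] at hf hg
      have h0 : f 0 = g 0 := h
      clear h
      have h1 : f 1 = g 1 := by omega
      funext i
      fin_cases i
      · exact h0
      · exact h1
  simpa using this

lemma upper_bound {d : ℕ} {W : Finset (Fin 2 → ℕ)} (hW : W ⊆ Mset 2 d)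
    (hR : (R1 2 W).card = 2 * W.card) : W.card ≤ d / 2 + 1 := by
  have hsub : R1 2 W ⊆ Mset 2 (d+1) := by
    intro x hx
    simp only [R1, Finset.mem_image, Finset.mem_product] at hx
    obtain ⟨⟨a, i⟩, ⟨ha, _⟩, rfl⟩ := hx
    have := mem_Mset.mp (hW ha)
    rw [mem_Mset]
    simp only [Pi.add_apply]
    rw [Finset.sum_add_distrib, this, Finset.sum_pi_single']
    simp
  have h1 := Finset.card_le_card hsub
  have h2 := card_Mset_two_le (d+1)
  omega

/-- `α₂(d) = ⌊d/2⌋ + 1`. -/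
theorem spread_two (d : ℕ) : spread 2 d = d / 2 + 1 := by
  set S := {k | ∃ W : Finset (Fin 2 → ℕ),
    W ⊆ Mset 2 d ∧ (R1 2 W).card = 2 * W.card ∧ W.card = k} with hS
  have hmem : d / 2 + 1 ∈ S := by
    refine ⟨(Finset.range (d/2+1)).image (fun k => ![2*k, d - 2*k]), ?_, ?_, ?_⟩
    · intro f hf
      simp only [Finset.mem_image, Finset.mem_range] at hf
      obtain ⟨k, hk, rfl⟩ := hf
      rw [mem_Mset, Fin.sum_univ_two]
      simp only [Matrix.cons_val_zero, Matrix.cons_val_one, Matrix.head_cons]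
      omega
    · rw [R1, Finset.card_image_of_injOn, Finset.card_product]
      · rw [Finset.card_univ, Fintype.card_fin]; ring
      · rintro ⟨f, i⟩ hp ⟨g, j⟩ hq h
        simp only [Finset.mem_coe, Finset.mem_product, Finset.mem_image, Finset.mem_range] at hp hq
        obtain ⟨⟨k, hk, rfl⟩, -⟩ := hp
        obtain ⟨⟨l, hl, rfl⟩, -⟩ := hq
        have h0 := congrFun h 0
        simp only [Pi.add_apply, Matrix.cons_val_zero] at h0
        fin_cases i <;> fin_cases j <;>
          simp only [Pi.single_apply] at h0 <;>
          norm_num at h0 <;>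
          first
            | omega
            | (obtain rfl : k = l := by omega
               rfl)
    · rw [Finset.card_image_of_injOn]
      · simp
      · intro k _ l _ h
        have := congrFun h 0
        simp only [Matrix.cons_val_zero] at this
        omega
  have hbdd : ∀ k ∈ S, k ≤ d / 2 + 1 := by
    rintro k ⟨W, hW, hR, rfl⟩
    exact upper_bound hW hR
  rw [spread]
  exact le_antisymm (csSup_le ⟨_, hmem⟩ hbdd) (le_csSup ⟨d/2+1, hbdd⟩ hmem)
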